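/- For real n ≥ 2, the function g(n) = n m(n)(1 − m(n)), where m(n) = (1/n)(1 − 1/n)^{n−1}, is monotone decreasing for n ≥ 3. -/

import Mathlib

noncomputable def mFun (n : ℝ) : ℝ := (1 / n) * (1 - 1 / n) ^ (n - 1)

open Real

noncomputable def pFun (n : ℝ) : ℝ := (1 - 1 / n) ^ (n - 1)

lemma base_pos {n : ℝ} (hn : 2 < n) : (0:ℝ) < 1 - 1/n := by
  rw [sub_pos, div_lt_one (by linarith)]; linarith

lemma pFun_pos {n : ℝ} (hn : 2 < n) : 0 < pFun n :=
  Real.rpow_pos_of_pos (base_pos hn) _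

lemma hasDerivAt_pFun {n : ℝ} (hn : 2 < n) :
    HasDerivAt pFun (pFun n * (Real.log (1 - 1/n) + 1/n)) n := by
  have hn0 : n ≠ 0 := by linarith
  have hb : (0:ℝ) < 1 - 1/n := base_pos hn
  have h1 : HasDerivAt (fun n : ℝ => 1 - 1/n) ((n^2)⁻¹) n := by
    simpa using ((hasDerivAt_inv hn0).const_sub 1)
  have h2 : HasDerivAt (fun n : ℝ => n - 1) 1 n := (hasDerivAt_id n).sub_const 1
  have h := (h1.rpow h2 (by simpa using hb))
  convert h using 1
  · rfl
  rw [Real.rpow_sub_one hb.ne']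
  unfold pFun
  set P := (1 - 1/n) ^ (n - 1) with hP
  set Lg := Real.log (1 - 1/n) with hLg
  have hnn : (-n^2 + n^3) ≠ 0 := by nlinarith
  field_simp [hnn]
  have hn1 : (-1 + n : ℝ) ≠ 0 := by intro h; linarith
  linear_combination (-P) * (mul_inv_cancel₀ hn1)

lemma L_nonpos {n : ℝ} (hn : 2 < n) : Real.log (1 - 1/n) + 1/n ≤ 0 := by
  have := Real.log_le_sub_one_of_pos (base_pos hn)
  linarith

lemma pFun_antitone : AntitoneOn pFun (Set.Ici (3:ℝ)) := by
  apply antitoneOn_of_deriv_nonpos (convex_Ici 3)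
  · intro n hn
    exact (hasDerivAt_pFun (by simp at hn; linarith)).continuousAt.continuousWithinAt
  · intro n hn
    rw [interior_Ici] at hn
    exact (hasDerivAt_pFun (by simp at hn; linarith)).differentiableAt.differentiableWithinAt
  · intro n hn
    rw [interior_Ici] at hn
    simp only [Set.mem_Ioi] at hn
    have hn2 : 2 < n := by linarith
    rw [(hasDerivAt_pFun hn2).deriv]
    have := L_nonpos hn2
    nlinarith [pFun_pos hn2]

lemma pFun_three : pFun 3 = 4/9 := by
  have : pFun 3 = (2/3 : ℝ) ^ ((2:ℕ):ℝ) := by norm_num [pFun]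
  rw [this, Real.rpow_natCast]; norm_num

lemma pFun_le {n : ℝ} (hn : 3 ≤ n) : pFun n ≤ 4/9 := by
  have := pFun_antitone (Set.self_mem_Ici) hn hn
  rwa [pFun_three] at this

lemma log_lb {x : ℝ} (h0 : 0 < x) (h3 : x ≤ 1/3) :
    x + x^2/2 + x^3/3 + x^4/4 + x^5/5 + x^6/6 - (3/2)*x^7 ≤ -Real.log (1-x) := by
  have habs : |x| < 1 := by rw [abs_of_pos h0]; linarith
  have h := Real.abs_log_sub_add_sum_range_le habs 6
  rw [abs_of_pos h0] at h
  have hsum : (∑ i ∈ Finset.range 6, x^(i+1)/(i+1))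
      = x + x^2/2 + x^3/3 + x^4/4 + x^5/5 + x^6/6 := by
    simp [Finset.sum_range_succ]
    norm_num
  rw [hsum] at h
  have h2 := le_of_abs_le h
  norm_num at h2
  have hx1 : (0:ℝ) < 1 - x := by linarith
  have h3' : x^7/(1-x) ≤ (3/2)*x^7 := by
    rw [div_le_iff₀ hx1]
    nlinarith [pow_pos h0 7]
  linarith

lemma poly_ineq {x p L : ℝ} (hx0 : 0 < x) (hx3 : x ≤ 1/3) (hp0 : 0 < p) (hp4 : p ≤ 4/9)
    (hL : x^2/2 + x^3/3 + x^4/4 + x^5/5 + x^6/6 - (3/2)*x^7 ≤ -L) :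
    p*x^2 + L*(1 - 2*p*x) ≤ 0 := by
  have h1 : 0 < 1 - 2*p*x := by nlinarith
  have h7 : x^7 ≤ x^6*(1/3) := by nlinarith [pow_nonneg hx0.le 6]
  have h6 : x^6 ≤ x^5*(1/3) := by nlinarith [pow_nonneg hx0.le 5]
  have hS : 0 ≤ x^2/2 + x^3/3 + x^4/4 + x^5/5 + x^6/6 - (3/2)*x^7 := by
    nlinarith [pow_nonneg hx0.le 2, pow_nonneg hx0.le 3, pow_nonneg hx0.le 4, pow_nonneg hx0.le 5]
  have h2 : L*(1 - 2*p*x) ≤ -(x^2/2 + x^3/3 + x^4/4 + x^5/5 + x^6/6 - (3/2)*x^7)*(1 - 2*p*x) := by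
    apply mul_le_mul_of_nonneg_right _ h1.le
    linarith
  have h3 : p*x^2 ≤ (x^2/2 + x^3/3 + x^4/4 + x^5/5 + x^6/6 - (3/2)*x^7)*(1 - 2*p*x) := by
    nlinarith [pow_pos hx0 2, pow_pos hx0 3, pow_pos hx0 4, pow_pos hx0 5, pow_pos hx0 6, pow_pos hx0 7, mul_pos hp0 hx0, sq_nonneg (x - 1/3), sq_nonneg (p - 4/9)]
  nlinarith

lemma hasDerivAt_g {n : ℝ} (hn : 2 < n) :
    HasDerivAt (fun n : ℝ => n * mFun n * (1 - mFun n))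
      (pFun n * (pFun n/n^2 + (Real.log (1 - 1/n) + 1/n) * (1 - 2*pFun n/n))) n := by
  have hn0 : n ≠ 0 := by linarith
  have hinv : HasDerivAt (fun n : ℝ => 1/n) (-(n^2)⁻¹) n := by
    simpa using hasDerivAt_inv hn0
  have hm : HasDerivAt mFun
      (-(n^2)⁻¹ * pFun n + (1/n) * (pFun n * (Real.log (1 - 1/n) + 1/n))) n :=
    hinv.mul (hasDerivAt_pFun hn)
  have hnm : HasDerivAt (fun n : ℝ => n * mFun n)
      (1 * mFun n + n * (-(n^2)⁻¹ * pFun n + (1/n) * (pFun n * (Real.log (1 - 1/n) + 1/n)))) n :=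
    (hasDerivAt_id n).mul hm
  have hsub : HasDerivAt (fun n : ℝ => 1 - mFun n)
      (-(-(n^2)⁻¹ * pFun n + (1/n) * (pFun n * (Real.log (1 - 1/n) + 1/n)))) n :=
    hm.const_sub 1
  have hg := hnm.mul hsub
  convert hg using 1
  · rfl
  · rfl
  · rfl
  have hmval : mFun n = (1/n) * pFun n := rfl
  rw [hmval]
  set P := pFun n
  set Lg := Real.log (1 - 1/n)
  field_simp
  ring

theorem g_antitone :
    AntitoneOn (fun n : ℝ => n * mFun n * (1 - mFun n)) (Set.Ici (3 : ℝ)) := by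
  apply antitoneOn_of_deriv_nonpos (convex_Ici 3)
  · intro n hn
    exact (hasDerivAt_g (by simp at hn; linarith)).continuousAt.continuousWithinAt
  · intro n hn
    rw [interior_Ici] at hn
    exact (hasDerivAt_g (by simp at hn; linarith)).differentiableAt.differentiableWithinAt
  · intro n hn
    rw [interior_Ici] at hn
    simp only [Set.mem_Ioi] at hn
    have hn2 : 2 < n := by linarith
    have hn3 : 3 ≤ n := hn.le
    rw [(hasDerivAt_g hn2).deriv]
    have hp0 := pFun_pos hn2
    have hp4 := pFun_le hn3
    have hx0 : 0 < 1/n := by positivity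
    have hx3 : 1/n ≤ 1/3 := by
      rw [div_le_div_iff₀ (by linarith) (by norm_num)]; linarith
    have hlog := log_lb hx0 hx3
    have hkey : pFun n * (1/n)^2 + (Real.log (1 - 1/n) + 1/n) * (1 - 2*pFun n*(1/n)) ≤ 0 := by
      apply poly_ineq hx0 hx3 hp0 hp4
      linarith
    have hp : (0:ℝ) ≤ pFun n := hp0.le
    have heq : pFun n/n^2 + (Real.log (1 - 1/n) + 1/n) * (1 - 2*pFun n/n)
        = pFun n * (1/n)^2 + (Real.log (1 - 1/n) + 1/n) * (1 - 2*pFun n*(1/n)) := by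
      field_simp
    rw [heq]
    exact mul_nonpos_of_nonneg_of_nonpos hp hkey
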